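/- arXiv:1802.01453 — 2 statements merged into one kernel-verified Lean document; each statement's English description precedes it below -/
import Mathlib

section
/- Fix natural numbers p and q. For every finite graph G and vertex v ∈ V(G), the number of vertex sets U ⊆ V(G) such that v ∈ U, the induced subgraph G[U] is connected, |U| ≤ p, and |N(U)| ≤ q, is at most the binomial coefficient C(p+q, p). -/
/-- The (open, external) neighborhood N(U): vertices outside U with a neighbor in U. -/
def SimpleGraph.extNbhd {V : Type*} [Fintype V] [DecidableEq V] (G : SimpleGraph V)
    [DecidableRel G.Adj] (U : Finset V) : Finset V :=
  Finset.univ.filter (fun v => v ∉ U ∧ ∃ u ∈ U, G.Adj u v)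

lemma mem_extNbhd {V : Type*} [Fintype V] [DecidableEq V] {G : SimpleGraph V}
    [DecidableRel G.Adj] {U : Finset V} {w : V} :
    w ∈ G.extNbhd U ↔ w ∉ U ∧ ∃ u ∈ U, G.Adj u w := by
  simp [SimpleGraph.extNbhd]

/-- The generalized Fomin–Villanger counting lemma. -/
lemma fv_key {V : Type*} [Fintype V] [DecidableEq V] (G : SimpleGraph V)
    [DecidableRel G.Adj] :
    ∀ n p q : ℕ, ∀ A X : Finset V, p + q ≤ n → A.Nonempty →
    (Finset.univ.filter (fun U : Finset V => A ⊆ U ∧ U ∩ X = ∅ ∧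
        (G.induce (↑U : Set V)).Connected ∧ (U \ A).card ≤ p ∧
        ((G.extNbhd U) \ X).card ≤ q)).card ≤ Nat.choose (p + q) p := by
  intro n
  induction n using Nat.strong_induction_on with
  | _ n ih =>
    intro p q A X hpq hA
    rcases (G.extNbhd A \ X).eq_empty_or_nonempty with hE | ⟨w, hw⟩
    · -- no available vertex: U must equal A, at most one set
      have hNX : G.extNbhd A ⊆ X := Finset.sdiff_eq_empty_iff_subset.mp hE
      have hsub : (Finset.univ.filter (fun U : Finset V => A ⊆ U ∧ U ∩ X = ∅ ∧
          (G.induce (↑U : Set V)).Connected ∧ (U \ A).card ≤ p ∧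
          ((G.extNbhd U) \ X).card ≤ q)) ⊆ {A} := by
        intro U hU
        simp only [Finset.mem_filter, Finset.mem_univ, true_and] at hU
        obtain ⟨hAU, hUX, hconn, -, -⟩ := hU
        have hUA : U ⊆ A := by
          intro u hu
          obtain ⟨a, ha⟩ := hA
          have haU : a ∈ U := hAU ha
          have hreach := hconn ⟨a, haU⟩ ⟨u, hu⟩
          obtain ⟨wlk⟩ := hreach
          have claim : ∀ (x y : (↑U : Set V)),
              (G.induce (↑U : Set V)).Walk x y → x.1 ∈ A → y.1 ∈ A := by
            intro x y wk
            induction wk with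
            | nil => exact fun h => h
            | cons hadj wk' ih' =>
              rename_i x' z' y' 
              intro hx
              apply ih'
              by_contra hz
              have hzN : z'.1 ∈ G.extNbhd A := by
                rw [mem_extNbhd]
                exact ⟨hz, x'.1, hx, hadj⟩
              have hzX : z'.1 ∈ X := hNX hzN
              have : z'.1 ∈ U ∩ X := Finset.mem_inter.mpr ⟨z'.2, hzX⟩
              simp [hUX] at this
          exact claim _ _ wlk ha
        simp [Finset.Subset.antisymm hUA hAU]
      calc _ ≤ ({A} : Finset (Finset V)).card := Finset.card_le_card hsub
        _ = 1 := Finset.card_singleton A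
        _ ≤ Nat.choose (p + q) p := Nat.choose_pos (Nat.le_add_right p q)
    · -- branch on w
      simp only [Finset.mem_sdiff, mem_extNbhd] at hw
      obtain ⟨⟨hwA, a, haA, haw⟩, hwX⟩ := hw
      set P : Finset V → Prop := fun U => A ⊆ U ∧ U ∩ X = ∅ ∧
          (G.induce (↑U : Set V)).Connected ∧ (U \ A).card ≤ p ∧
          ((G.extNbhd U) \ X).card ≤ q with hP
      set S := Finset.univ.filter (fun U : Finset V => P U) with hS
      have hsplit : (S.filter (fun U => w ∈ U)).card
          + (S.filter (fun U => ¬ w ∈ U)).card = S.card :=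
        Finset.card_filter_add_card_filter_not _
      -- branch 1 : w ∈ U
      have h1 : ∀ p' : ℕ, p = p' + 1 →
          (S.filter (fun U => w ∈ U)).card ≤ Nat.choose (p' + q) p' := by
        intro p' hp'
        have hsub : S.filter (fun U => w ∈ U) ⊆
            Finset.univ.filter (fun U : Finset V => insert w A ⊆ U ∧ U ∩ X = ∅ ∧
              (G.induce (↑U : Set V)).Connected ∧ (U \ insert w A).card ≤ p' ∧
              ((G.extNbhd U) \ X).card ≤ q) := by
          intro U hU
          simp only [hS, hP, Finset.mem_filter, Finset.mem_univ, true_and] at hU ⊢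
          obtain ⟨⟨hAU, hUX, hconn, hcard, hnb⟩, hwU⟩ := hU
          refine ⟨Finset.insert_subset hwU hAU, hUX, hconn, ?_, hnb⟩
          have hwUA : w ∈ U \ A := Finset.mem_sdiff.mpr ⟨hwU, hwA⟩
          rw [Finset.sdiff_insert, Finset.card_erase_of_mem hwUA]
          omega
        calc (S.filter (fun U => w ∈ U)).card ≤ _ := Finset.card_le_card hsub
          _ ≤ Nat.choose (p' + q) p' := by
            apply ih (p' + q) (by omega) p' q (insert w A) X le_rfl ⟨w, Finset.mem_insert_self w A⟩
      have h1' : p = 0 → (S.filter (fun U => w ∈ U)).card = 0 := by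
        intro hp0
        rw [Finset.card_eq_zero, Finset.filter_eq_empty_iff]
        intro U hU
        simp only [hS, hP, Finset.mem_filter, Finset.mem_univ, true_and] at hU
        obtain ⟨hAU, -, -, hcard, -⟩ := hU
        intro hwU
        have hwUA : w ∈ U \ A := Finset.mem_sdiff.mpr ⟨hwU, hwA⟩
        have := Finset.card_pos.mpr ⟨w, hwUA⟩
        omega
      -- branch 2 : w ∉ U
      have h2 : ∀ q' : ℕ, q = q' + 1 →
          (S.filter (fun U => ¬ w ∈ U)).card ≤ Nat.choose (p + q') p := by
        intro q' hq'
        have hsub : S.filter (fun U => ¬ w ∈ U) ⊆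
            Finset.univ.filter (fun U : Finset V => A ⊆ U ∧ U ∩ insert w X = ∅ ∧
              (G.induce (↑U : Set V)).Connected ∧ (U \ A).card ≤ p ∧
              ((G.extNbhd U) \ insert w X).card ≤ q') := by
          intro U hU
          simp only [hS, hP, Finset.mem_filter, Finset.mem_univ, true_and] at hU ⊢
          obtain ⟨⟨hAU, hUX, hconn, hcard, hnb⟩, hwU⟩ := hU
          refine ⟨hAU, ?_, hconn, hcard, ?_⟩
          · rw [Finset.inter_insert_of_notMem hwU]; exact hUX
          · have hwN : w ∈ (G.extNbhd U) \ X := by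
              rw [Finset.mem_sdiff, mem_extNbhd]
              exact ⟨⟨hwU, a, hAU haA, haw⟩, hwX⟩
            rw [Finset.sdiff_insert, Finset.card_erase_of_mem]
            · omega
            · exact Finset.mem_sdiff.mpr ⟨(Finset.mem_sdiff.mp hwN).1, hwX⟩
        calc (S.filter (fun U => ¬ w ∈ U)).card ≤ _ := Finset.card_le_card hsub
          _ ≤ Nat.choose (p + q') p :=
            ih (p + q') (by omega) p q' A (insert w X) le_rfl hA
      have h2' : q = 0 → (S.filter (fun U => ¬ w ∈ U)).card = 0 := by
        intro hq0
        rw [Finset.card_eq_zero, Finset.filter_eq_empty_iff]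
        intro U hU
        simp only [hS, hP, Finset.mem_filter, Finset.mem_univ, true_and] at hU
        obtain ⟨hAU, -, -, -, hnb⟩ := hU
        intro hwU
        have hwN : w ∈ (G.extNbhd U) \ X := by
          rw [Finset.mem_sdiff, mem_extNbhd]
          exact ⟨⟨hwU, a, hAU haA, haw⟩, hwX⟩
        have := Finset.card_pos.mpr ⟨w, hwN⟩
        omega
      -- combine
      rcases Nat.eq_zero_or_pos p with hp0 | hpp
      · rcases Nat.eq_zero_or_pos q with hq0 | hqq
        · rw [← hsplit, h1' hp0, h2' hq0]; omega
        · obtain ⟨q', rfl⟩ : ∃ q', q = q' + 1 := ⟨q - 1, by omega⟩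
          have := h2 q' rfl
          rw [← hsplit, h1' hp0]
          subst hp0
          simpa using this
      · obtain ⟨p', rfl⟩ : ∃ p', p = p' + 1 := ⟨p - 1, by omega⟩
        rcases Nat.eq_zero_or_pos q with hq0 | hqq
        · have := h1 p' rfl
          rw [← hsplit, h2' hq0]
          subst hq0
          simpa using this
        · obtain ⟨q', rfl⟩ : ∃ q', q = q' + 1 := ⟨q - 1, by omega⟩
          have hb1 := h1 p' rfl
          have hb2 := h2 q' rfl
          have hpas : Nat.choose (p' + 1 + (q' + 1)) (p' + 1)
              = Nat.choose (p' + (q' + 1)) p' + Nat.choose (p' + 1 + q') (p' + 1) := by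
            have : p' + 1 + (q' + 1) = (p' + 1 + q') + 1 := by ring
            rw [this, Nat.choose_succ_succ']
            congr 2
            omega
          omega

theorem stmt_13 (p q : ℕ) {V : Type*} [Fintype V] [DecidableEq V]
    (G : SimpleGraph V) [DecidableRel G.Adj] (v : V) :
    {U : Finset V | v ∈ U ∧ (G.induce (↑U : Set V)).Connected ∧
        U.card ≤ p ∧ (G.extNbhd U).card ≤ q}.ncard ≤ Nat.choose (p + q) p := by
  rcases Nat.eq_zero_or_pos p with hp0 | hpp
  · have : {U : Finset V | v ∈ U ∧ (G.induce (↑U : Set V)).Connected ∧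
        U.card ≤ p ∧ (G.extNbhd U).card ≤ q} = ∅ := by
      ext U
      simp only [Set.mem_setOf_eq, Set.mem_empty_iff_false, iff_false, not_and]
      intro hv _ hc _
      have := Finset.card_pos.mpr ⟨v, hv⟩
      omega
    rw [this, Set.ncard_empty]
    exact Nat.zero_le _
  · obtain ⟨p', rfl⟩ : ∃ p', p = p' + 1 := ⟨p - 1, by omega⟩
    set T := Finset.univ.filter (fun U : Finset V => ({v} : Finset V) ⊆ U ∧
        U ∩ (∅ : Finset V) = ∅ ∧ (G.induce (↑U : Set V)).Connected ∧
        (U \ {v}).card ≤ p' ∧ ((G.extNbhd U) \ (∅ : Finset V)).card ≤ q) with hT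
    have hsub : {U : Finset V | v ∈ U ∧ (G.induce (↑U : Set V)).Connected ∧
        U.card ≤ p' + 1 ∧ (G.extNbhd U).card ≤ q} ⊆ ↑T := by
      intro U hU
      obtain ⟨hv, hconn, hcard, hnb⟩ := hU
      simp only [hT, Finset.coe_filter, Finset.mem_univ, true_and, Set.mem_setOf_eq]
      refine ⟨Finset.singleton_subset_iff.mpr hv, Finset.inter_empty U, hconn, ?_, ?_⟩
      · rw [Finset.sdiff_singleton_eq_erase, Finset.card_erase_of_mem hv]
        omega
      · rw [Finset.sdiff_empty]; exact hnb
    have h1 : {U : Finset V | v ∈ U ∧ (G.induce (↑U : Set V)).Connected ∧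
        U.card ≤ p' + 1 ∧ (G.extNbhd U).card ≤ q}.ncard ≤ (↑T : Set (Finset V)).ncard :=
      Set.ncard_le_ncard hsub T.finite_toSet
    have h2 : (↑T : Set (Finset V)).ncard = T.card := Set.ncard_coe_finset T
    have h3 : T.card ≤ Nat.choose (p' + q) p' :=
      fv_key G (p' + q) p' q {v} ∅ le_rfl ⟨v, Finset.mem_singleton_self v⟩
    have h4 : Nat.choose (p' + q) p' ≤ Nat.choose (p' + 1 + q) (p' + 1) := by
      have : p' + 1 + q = (p' + q) + 1 := by ring
      rw [this, Nat.choose_succ_succ']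
      omega
    omega
end

section
/- Let G be an (s,k)-unbreakable graph, R ⊆ E(G) with G[R] a cluster graph whose cliques have vertex sets R_1, …, R_r, and let S ⊆ V(G) \ V[R] with |S| ≤ k be such that for all u,v ∈ V[R], u and v are in the same component of (G \ S) − R iff some edge of R joins them. For each j, let C_j be the component of (G \ S) − R containing R_j. Then there is an index i such that |V(C_j)| ≤ s for all j ≠ i. -/
/-- A separation of a graph: a pair (X,Y) of vertex sets covering V(G)
with no edge between X \ Y and Y \ X. -/
def SimpleGraph.IsSep {V : Type*} [Fintype V] [DecidableEq V] (G : SimpleGraph V)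
    (X Y : Finset V) : Prop :=
  X ∪ Y = Finset.univ ∧ ∀ x ∈ X \ Y, ∀ y ∈ Y \ X, ¬ G.Adj x y

/-- A graph is (s,c)-unbreakable if it has no separation of order at most c
with both sides (minus the separator) of size greater than s. -/
def SimpleGraph.Unbreakable {V : Type*} [Fintype V] [DecidableEq V] (G : SimpleGraph V)
    (s c : ℕ) : Prop :=
  ¬ ∃ X Y : Finset V, G.IsSep X Y ∧ (X ∩ Y).card ≤ c ∧ s < (X \ Y).card ∧ s < (Y \ X).card

/-- A cluster graph: the vertex set can be partitioned into parts such that two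
distinct vertices are adjacent iff they lie in a common part (each part is a
clique, and there are no edges between distinct parts). -/
def SimpleGraph.IsClusterGraph {V : Type*} (H : SimpleGraph V) : Prop :=
  ∃ P : Set (Set V), (∀ A ∈ P, ∀ B ∈ P, A ≠ B → Disjoint A B) ∧ ⋃₀ P = Set.univ ∧
    ∀ u v : V, H.Adj u v ↔ u ≠ v ∧ ∃ A ∈ P, u ∈ A ∧ v ∈ A

set_option maxHeartbeats 2000000 in
theorem stmt_18 {V : Type*} [Fintype V] [DecidableEq V] (G : SimpleGraph V) (s k : ℕ)
    (hG : G.Unbreakable s k) (R : Set (Sym2 V)) (hR : R ⊆ G.edgeSet)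
    (hclust : (SimpleGraph.fromEdgeSet R).IsClusterGraph)
    (S : Finset V) (hSk : S.card ≤ k) (hS : ∀ v ∈ S, ¬ ∃ e ∈ R, v ∈ e)
    -- S is a solution: two distinct vertices of V[R] lie in the same connected
    -- component of (G \ S) − R iff some edge of R has them as its endpoints
    (hsol : ∀ u v : ↥((↑S : Set V)ᶜ), (u : V) ≠ (v : V) →
      (∃ e ∈ R, (u : V) ∈ e) → (∃ e ∈ R, (v : V) ∈ e) →
      (((G.deleteEdges R).induce ((↑S : Set V)ᶜ)).Reachable u v ↔
        s((u : V), (v : V)) ∈ R)) :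
    -- at most one connected component of (G \ S) − R containing a vertex of V[R]
    -- has more than s vertices
    ∀ C C' : ((G.deleteEdges R).induce ((↑S : Set V)ᶜ)).ConnectedComponent,
      (∃ u ∈ Subtype.val '' C.supp, ∃ e ∈ R, u ∈ e) →
      (∃ u ∈ Subtype.val '' C'.supp, ∃ e ∈ R, u ∈ e) →
      s < C.supp.ncard → s < C'.supp.ncard → C = C' := by
  classical
  intro C C' _ _ hs hs'
  by_contra hne
  apply hG
  set A : Finset V := (Subtype.val '' C.supp).toFinset with hA
  set A' : Finset V := (Subtype.val '' C'.supp).toFinset with hA'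
  have hAS : ∀ x ∈ A, x ∉ S := by
    intro x hx
    rw [hA, Set.mem_toFinset] at hx
    obtain ⟨a, _, rfl⟩ := hx
    exact a.2
  have hAS' : ∀ x ∈ A', x ∉ S := by
    intro x hx
    rw [hA', Set.mem_toFinset] at hx
    obtain ⟨a, _, rfl⟩ := hx
    exact a.2
  have hAcard : A.card = C.supp.ncard := by
    rw [hA, ← Set.ncard_eq_toFinset_card',
      Set.ncard_image_of_injective _ Subtype.val_injective]
  have hA'card : A'.card = C'.supp.ncard := by
    rw [hA', ← Set.ncard_eq_toFinset_card',
      Set.ncard_image_of_injective _ Subtype.val_injective]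
  have hdisj : ∀ y, y ∈ A' → y ∉ A := by
    intro y hy' hy
    rw [hA, Set.mem_toFinset] at hy
    rw [hA', Set.mem_toFinset] at hy'
    obtain ⟨a, ha, rfl⟩ := hy
    obtain ⟨b, hb, hba⟩ := hy'
    have : b = a := Subtype.ext hba
    subst this
    exact hne (ha ▸ hb)
  refine ⟨A ∪ S, Aᶜ, ⟨?_, ?_⟩, ?_, ?_, ?_⟩
  · ext v
    simp only [Finset.mem_union, Finset.mem_compl, Finset.mem_univ, iff_true]
    tauto
  · intro x hx y hy hadj
    simp only [Finset.mem_sdiff, Finset.mem_union, Finset.mem_compl, not_not] at hx hy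
    have hxA : x ∈ A := hx.2
    have hyA : y ∉ A := hy.1
    have hyS : y ∉ S := fun h => hy.2 (Or.inr h)
    rw [hA, Set.mem_toFinset] at hxA
    obtain ⟨a, ha, rfl⟩ := hxA
    have hyc : y ∈ ((↑S : Set V)ᶜ) := hyS
    set b : ↥((↑S : Set V)ᶜ) := ⟨y, hyc⟩ with hb
    have hreach : ((G.deleteEdges R).induce ((↑S : Set V)ᶜ)).Reachable a b := by
      by_cases hmem : s((a : V), y) ∈ R
      · have hxe : ∃ e ∈ R, (a : V) ∈ e := ⟨_, hmem, Sym2.mem_mk_left _ _⟩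
        have hye : ∃ e ∈ R, (b : V) ∈ e := ⟨_, hmem, Sym2.mem_mk_right _ _⟩
        exact (hsol a b hadj.ne hxe hye).mpr hmem
      · have : ((G.deleteEdges R).induce ((↑S : Set V)ᶜ)).Adj a b := by
          simp only [SimpleGraph.comap_adj, Function.Embedding.coe_subtype,
            SimpleGraph.deleteEdges_adj]
          exact ⟨hadj, hmem⟩
        exact this.reachable
    have hbC : b ∈ C.supp := by
      have := SimpleGraph.ConnectedComponent.sound hreach.symm
      rw [SimpleGraph.ConnectedComponent.mem_supp_iff, this]
      exact ha
    exact hyA (by rw [hA, Set.mem_toFinset]; exact ⟨b, hbC, rfl⟩)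
  · calc ((A ∪ S) ∩ Aᶜ).card ≤ S.card := by
          apply Finset.card_le_card
          intro v hv
          simp only [Finset.mem_inter, Finset.mem_union, Finset.mem_compl] at hv
          tauto
       _ ≤ k := hSk
  · have : (A ∪ S) \ Aᶜ = A := by
      ext v
      simp only [Finset.mem_sdiff, Finset.mem_union, Finset.mem_compl, not_not]
      tauto
    rw [this, hAcard]; exact hs
  · have hsub : A' ⊆ Aᶜ \ (A ∪ S) := by
      intro v hv
      simp only [Finset.mem_sdiff, Finset.mem_union, Finset.mem_compl]
      exact ⟨hdisj v hv, fun h => h.elim (hdisj v hv) (hAS' v hv)⟩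
    calc s < A'.card := hA'card ▸ hs'
      _ ≤ (Aᶜ \ (A ∪ S)).card := Finset.card_le_card hsub
end
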